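/- Let p ∈ ℂ[X] be a nonconstant polynomial, U ⊆ ℂ a simply connected open set, and U' a connected component of p⁻¹(U). If p'(z) ≠ 0 for every z ∈ U', then p is injective on U' and U' is simply connected. -/

import Mathlib

open Set

open Filter Metric Topology Polynomial
open scoped ContinuousMap

set_option maxHeartbeats 1000000

noncomputable section

namespace FatouAux


/-- `e` is a sheet for `p` over the set `U'`. -/
def Sheet (p : Polynomial ℂ) (U' : Set ℂ) (e : OpenPartialHomeomorph ℂ ℂ) : Prop :=
  e.source ⊆ U' ∧ ∀ x ∈ e.source, p.eval x = e x

def HasSheets (p : Polynomial ℂ) (U' : Set ℂ) : Prop :=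
  ∀ z ∈ U', ∃ e : OpenPartialHomeomorph ℂ ℂ, z ∈ e.source ∧ Sheet p U' e

/-- `g` is a lift of `γ` through `p` staying in `U'`, on the parameter set `s`. -/
def IsLift (p : Polynomial ℂ) (U' : Set ℂ) (γ g : ℝ → ℂ) (s : Set ℝ) : Prop :=
  ContinuousOn g s ∧ ∀ t ∈ s, g t ∈ U' ∧ p.eval (g t) = γ t

theorem IsLift.mono {p : Polynomial ℂ} {U' : Set ℂ} {γ g : ℝ → ℂ} {s s' : Set ℝ}
    (h : IsLift p U' γ g s) (hs : s' ⊆ s) : IsLift p U' γ g s' :=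
  ⟨h.1.mono hs, fun t ht => h.2 t (hs ht)⟩

/-- Uniqueness of lifts on preconnected sets. -/
theorem lift_unique {p : Polynomial ℂ} {U' : Set ℂ} (hsheets : HasSheets p U')
    {γ g₁ g₂ : ℝ → ℂ} {s : Set ℝ} (hs : IsPreconnected s)
    (h₁ : IsLift p U' γ g₁ s) (h₂ : IsLift p U' γ g₂ s)
    {a : ℝ} (ha : a ∈ s) (hag : g₁ a = g₂ a) : EqOn g₁ g₂ s := by
  haveI : PreconnectedSpace s := Subtype.preconnectedSpace hs
  have hc₁ : Continuous (s.restrict g₁) := h₁.1.restrict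
  have hc₂ : Continuous (s.restrict g₂) := h₂.1.restrict
  have hA : IsClopen {x : s | g₁ x = g₂ x} := by
    constructor
    · exact isClosed_eq hc₁ hc₂
    · rw [isOpen_iff_forall_mem_open]
      rintro x (hx : g₁ x = g₂ x)
      obtain ⟨e, hze, heU, hep⟩ := hsheets (g₁ x) (h₁.2 x x.2).1
      refine ⟨s.restrict g₁ ⁻¹' e.source ∩ s.restrict g₂ ⁻¹' e.source, ?_, ?_, ?_⟩
      · rintro y ⟨hy₁, hy₂⟩
        have hpe : p.eval (g₁ y) = p.eval (g₂ y) := by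
          rw [(h₁.2 y y.2).2, (h₂.2 y y.2).2]
        have : e (g₁ y) = e (g₂ y) := by
          rw [← hep (g₁ ↑y) hy₁, ← hep (g₂ ↑y) hy₂, hpe]
        exact e.injOn hy₁ hy₂ this
      · exact IsOpen.inter (hc₁.isOpen_preimage _ e.open_source)
          (hc₂.isOpen_preimage _ e.open_source)
      · exact ⟨hze, by rwa [mem_preimage, show s.restrict g₂ x = g₂ x from rfl, ← hx]⟩
  have : {x : s | g₁ x = g₂ x} = univ :=
    (isClopen_iff.mp hA).resolve_left (Nonempty.ne_empty ⟨⟨a, ha⟩, hag⟩)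
  intro t ht
  have := this ▸ mem_univ (⟨t, ht⟩ : s)
  exact this

/-- Gluing two continuous functions on adjacent intervals. -/
theorem glue_cont {a b c : ℝ} {f g : ℝ → ℂ} (hf : ContinuousOn f (Icc a b))
    (hg : ContinuousOn g (Icc b c)) (hfg : f b = g b) :
    ContinuousOn (fun t => if t ≤ b then f t else g t) (Icc a c) := by
  have hsub : Icc a c ⊆ Icc a b ∪ Icc b c := Icc_subset_Icc_union_Icc
  intro x hx
  have h1 : ∀ t ∈ Icc a b, (fun t => if t ≤ b then f t else g t) t = f t := by
    intro t ht; simp [ht.2]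
  have h2 : ∀ t ∈ Icc b c, (fun t => if t ≤ b then f t else g t) t = g t := by
    intro t ht
    by_cases h : t ≤ b
    · have : t = b := le_antisymm h ht.1
      simp [h, this, hfg]
    · simp [h]
  have hu : ContinuousWithinAt (fun t => if t ≤ b then f t else g t) (Icc a b ∪ Icc b c) x := by
    apply ContinuousWithinAt.union
    · by_cases hxab : x ∈ Icc a b
      · exact ((hf x hxab).congr h1 (h1 x hxab))
      · exact continuousWithinAt_of_notMem_closure (by rwa [isClosed_Icc.closure_eq])
    · by_cases hxbc : x ∈ Icc b c
      · exact ((hg x hxbc).congr h2 (h2 x hxbc))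
      · exact continuousWithinAt_of_notMem_closure (by rwa [isClosed_Icc.closure_eq])
  exact hu.mono hsub


theorem lift_exists {p : Polynomial ℂ} {U U' : Set ℂ} (hsheets : HasSheets p U')
    (hprop : ∀ K : Set ℂ, IsCompact K → IsCompact ((fun z => p.eval z) ⁻¹' K))
    (hclosed : ∀ z ∈ closure U', p.eval z ∈ U → z ∈ U')
    {γ : ℝ → ℂ} (hγ : Continuous γ) (hγU : ∀ t ∈ Icc (0:ℝ) 1, γ t ∈ U)
    {z₀ : ℂ} (hz₀ : z₀ ∈ U') (hpz : p.eval z₀ = γ 0) :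
    ∃ g, IsLift p U' γ g (Icc 0 1) ∧ g 0 = z₀ := by
  classical
  set S : Set ℝ := {b | b ∈ Icc (0:ℝ) 1 ∧ ∃ g, IsLift p U' γ g (Icc 0 b) ∧ g 0 = z₀} with hSdef
  have h0S : (0:ℝ) ∈ S := by
    refine ⟨⟨le_refl 0, zero_le_one⟩, fun _ => z₀, ⟨continuousOn_const, ?_⟩, rfl⟩
    intro t ht
    rw [Icc_self, mem_singleton_iff] at ht
    subst ht; exact ⟨hz₀, hpz⟩
  have hSbdd : BddAbove S := ⟨1, fun b hb => hb.1.2⟩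
  have hSne : S.Nonempty := ⟨0, h0S⟩
  set b' : ℝ := sSup S with hb'def
  have hb'0 : 0 ≤ b' := le_csSup hSbdd h0S
  have hb'1 : b' ≤ 1 := csSup_le hSne fun b hb => hb.1.2
  -- one-sheet extension of a lift
  have extend : ∀ (b c : ℝ) (e : OpenPartialHomeomorph ℂ ℂ), Sheet p U' e → b ∈ S →
      c ∈ Icc (0:ℝ) 1 → b ≤ c → (∀ t ∈ Icc b c, γ t ∈ e.target) →
      ∀ g, (IsLift p U' γ g (Icc 0 b) ∧ g 0 = z₀) → g b ∈ e.source → c ∈ S := by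
    intro b c e he hbS hc hbc htar g hg hgb
    have hb0 : (0:ℝ) ≤ b := hbS.1.1
    have h2 : IsLift p U' γ (fun t => e.symm (γ t)) (Icc b c) := by
      refine ⟨e.continuousOn_symm.comp hγ.continuousOn fun t ht => htar t ht, fun t ht => ?_⟩
      have h1 : e.symm (γ t) ∈ e.source := e.map_target (htar t ht)
      refine ⟨he.1 h1, ?_⟩
      rw [he.2 _ h1, e.right_inv (htar t ht)]
    have hmatch : g b = e.symm (γ b) := by
      have hb : b ∈ Icc 0 b := ⟨hb0, le_refl b⟩
      have : γ b = e (g b) := by rw [← (hg.1.2 b hb).2, he.2 _ hgb]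
      rw [this, e.left_inv hgb]
    refine ⟨hc, fun t => if t ≤ b then g t else e.symm (γ t), ⟨?_, ?_⟩, by simp [hb0, hg.2]⟩
    · exact glue_cont hg.1.1 h2.1 hmatch
    · intro t ht
      by_cases h : t ≤ b
      · simpa [h] using hg.1.2 t ⟨ht.1, h⟩
      · simpa [h] using h2.2 t ⟨(not_le.mp h).le, ht.2⟩
  -- the supremum belongs to S
  have hb'S : b' ∈ S := by
    by_cases hmem : b' ∈ S
    · exact hmem
    have hlt : ∀ b ∈ S, b < b' := fun b hb =>
      lt_of_le_of_ne (le_csSup hSbdd hb) fun h => hmem (h ▸ hb)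
    have hSg : ∀ b ∈ S, ∃ g, IsLift p U' γ g (Icc 0 b) ∧ g 0 = z₀ := fun b hb => hb.2
    choose! G hG using hSg
    have hcons : ∀ b₁ ∈ S, ∀ b₂ ∈ S, b₁ ≤ b₂ → EqOn (G b₁) (G b₂) (Icc 0 b₁) := by
      intro b₁ hb₁ b₂ hb₂ h
      exact lift_unique hsheets isPreconnected_Icc (hG b₁ hb₁).1
        ((hG b₂ hb₂).1.mono (Icc_subset_Icc_right h)) ⟨le_refl 0, hb₁.1.1⟩
        ((hG b₁ hb₁).2.trans (hG b₂ hb₂).2.symm)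
    set gInf : ℝ → ℂ := fun t => if h : ∃ b ∈ S, t ≤ b then G h.choose t else z₀ with hgInfdef
    have hgInf : ∀ b ∈ S, EqOn gInf (G b) (Icc 0 b) := by
      intro b hb t ht
      have hex : ∃ b ∈ S, t ≤ b := ⟨b, hb, ht.2⟩
      have hc1 : hex.choose ∈ S := hex.choose_spec.1
      have hc2 : t ≤ hex.choose := hex.choose_spec.2
      simp only [hgInfdef, dif_pos hex]
      rcases le_total hex.choose b with h | h
      · exact hcons _ hc1 _ hb h ⟨ht.1, hc2⟩
      · exact (hcons _ hb _ hc1 h ht).symm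
    -- a sequence in S tending to b'
    have hu : ∀ n : ℕ, ∃ x ∈ S, b' - 1 / ((n:ℝ) + 1) < x := by
      intro n
      refine exists_lt_of_lt_csSup hSne ?_
      have : (0:ℝ) < 1 / ((n:ℝ) + 1) := by positivity
      linarith
    choose u huS hult using hu
    have hK : IsCompact (γ '' Icc 0 1) := isCompact_Icc.image hγ
    have hz : ∀ n : ℕ, gInf (u n) ∈ (fun z => p.eval z) ⁻¹' (γ '' Icc 0 1) ∧ gInf (u n) ∈ U' := by
      intro n
      have h1 : u n ∈ Icc 0 (u n) := ⟨(huS n).1.1, le_refl _⟩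
      have h2 := hgInf (u n) (huS n) h1
      have h3 := (hG (u n) (huS n)).1.2 (u n) h1
      rw [h2]
      exact ⟨⟨u n, (huS n).1, h3.2.symm⟩, h3.1⟩
    obtain ⟨z', hz'K, φ, hφ, hφlim⟩ := (hprop _ hK).tendsto_subseq fun n => (hz n).1
    have htendφ : Tendsto (fun n => u (φ n)) atTop (𝓝 b') := by
      have hlow : Tendsto (fun n : ℕ => b' - 1 / ((φ n : ℝ) + 1)) atTop (𝓝 (b' - 0)) :=
        tendsto_const_nhds.sub
          (tendsto_one_div_add_atTop_nhds_zero_nat.comp hφ.tendsto_atTop)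
      rw [sub_zero] at hlow
      exact tendsto_of_tendsto_of_tendsto_of_le_of_le hlow tendsto_const_nhds
        (fun n => (hult (φ n)).le) fun n => le_csSup hSbdd (huS (φ n))
    have hpz' : p.eval z' = γ b' := by
      have h1 : Tendsto (fun n => p.eval (gInf (u (φ n)))) atTop (𝓝 (p.eval z')) :=
        (p.continuous.continuousAt.tendsto).comp hφlim
      have h2 : Tendsto (fun n => γ (u (φ n))) atTop (𝓝 (γ b')) :=
        (hγ.continuousAt.tendsto).comp htendφ
      have h3 : (fun n => p.eval (gInf (u (φ n)))) = fun n => γ (u (φ n)) := by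
        funext n
        have h1' : u (φ n) ∈ Icc 0 (u (φ n)) := ⟨(huS (φ n)).1.1, le_refl _⟩
        rw [hgInf _ (huS (φ n)) h1', ((hG _ (huS (φ n))).1.2 _ h1').2]
      rw [h3] at h1
      exact tendsto_nhds_unique h1 h2
    have hz'U' : z' ∈ U' := by
      refine hclosed z' (mem_closure_of_tendsto hφlim (Eventually.of_forall fun n => (hz _).2)) ?_
      rw [hpz']
      exact hγU b' ⟨hb'0, hb'1⟩
    obtain ⟨e, hz'e, he⟩ := hsheets z' hz'U'
    have hγb' : γ b' ∈ e.target := by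
      rw [← hpz', he.2 _ hz'e]; exact e.map_source hz'e
    obtain ⟨δ, hδ0, hδ⟩ : ∃ δ > 0, ball b' δ ⊆ γ ⁻¹' e.target := by
      have := hγ.continuousAt (x := b') |>.preimage_mem_nhds (e.open_target.mem_nhds hγb')
      rcases Metric.mem_nhds_iff.mp this with ⟨δ, hδ0, hδ⟩
      exact ⟨δ, hδ0, hδ⟩
    have hev : ∀ᶠ n in atTop, gInf (u (φ n)) ∈ e.source ∧ b' - δ < u (φ n) := by
      refine (hφlim.eventually (e.open_source.mem_nhds hz'e)).and ?_
      exact htendφ.eventually (eventually_gt_nhds (by linarith))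
    obtain ⟨n₀, hn₀⟩ := hev.exists
    set t₁ := u (φ n₀) with ht₁def
    have ht₁S : t₁ ∈ S := huS (φ n₀)
    have ht₁b' : t₁ ≤ b' := le_csSup hSbdd ht₁S
    have : b' ∈ S := by
      refine extend t₁ b' e he ht₁S ⟨hb'0, hb'1⟩ ht₁b' ?_ (G t₁) (hG t₁ ht₁S) ?_
      · intro t ht
        apply hδ
        rw [mem_ball, Real.dist_eq, abs_of_nonpos (by linarith [ht.2])]
        have := hn₀.2
        linarith [ht.1]
      · have h1 : t₁ ∈ Icc 0 t₁ := ⟨ht₁S.1.1, le_refl _⟩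
        rw [← hgInf t₁ ht₁S h1]
        exact hn₀.1
    exact absurd this hmem
  -- the supremum is 1
  have hb'eq : b' = 1 := by
    by_contra hne
    have hb'lt : b' < 1 := lt_of_le_of_ne hb'1 hne
    obtain ⟨g, hg⟩ := hb'S.2
    have hgb' : g b' ∈ U' := (hg.1.2 b' ⟨hb'0, le_refl _⟩).1
    obtain ⟨e, hge, he⟩ := hsheets _ hgb'
    have hγb' : γ b' ∈ e.target := by
      rw [← (hg.1.2 b' ⟨hb'0, le_refl _⟩).2, he.2 _ hge]
      exact e.map_source hge
    obtain ⟨δ, hδ0, hδ⟩ : ∃ δ > 0, ball b' δ ⊆ γ ⁻¹' e.target := by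
      have := hγ.continuousAt (x := b') |>.preimage_mem_nhds (e.open_target.mem_nhds hγb')
      rcases Metric.mem_nhds_iff.mp this with ⟨δ, hδ0, hδ⟩
      exact ⟨δ, hδ0, hδ⟩
    set c := min 1 (b' + δ / 2) with hcdef
    have hb'c : b' < c := lt_min hb'lt (by linarith)
    have hcS : c ∈ S := by
      refine extend b' c e he hb'S ⟨by positivity, min_le_left _ _⟩ hb'c.le ?_ g hg hge
      intro t ht
      apply hδ
      rw [mem_ball, Real.dist_eq, abs_of_nonneg (by linarith [ht.1] : (0:ℝ) ≤ t - b')]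
      have : t ≤ b' + δ / 2 := le_trans ht.2 (min_le_right _ _)
      linarith
    exact absurd (le_csSup hSbdd hcS) (not_le.mpr hb'c)
  rw [hb'eq] at hb'S
  exact hb'S.2


theorem sheet_switch {p : Polynomial ℂ} {U' : Set ℂ}
    {e₁ e₂ : OpenPartialHomeomorph ℂ ℂ} (h₁ : Sheet p U' e₁) (h₂ : Sheet p U' e₂)
    {F : ℝ → ℂ} {s₀ : ℝ} (hF : ContinuousAt F s₀) (hFt : F s₀ ∈ e₁.target)
    (hsw : e₁.symm (F s₀) ∈ e₂.source) :
    ∀ᶠ s in 𝓝 s₀, (F s ∈ e₁.target ∧ F s ∈ e₂.target) ∧ e₁.symm (F s) = e₂.symm (F s) := by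
  have hev1 : ∀ᶠ s in 𝓝 s₀, F s ∈ e₁.target :=
    hF.preimage_mem_nhds (e₁.open_target.mem_nhds hFt)
  have hx : ContinuousAt (fun s => e₁.symm (F s)) s₀ := (e₁.continuousAt_symm hFt).comp hF
  have hev2 : ∀ᶠ s in 𝓝 s₀, e₁.symm (F s) ∈ e₂.source :=
    hx.preimage_mem_nhds (e₂.open_source.mem_nhds hsw)
  filter_upwards [hev1, hev2] with s h1 h2
  have hsrc : e₁.symm (F s) ∈ e₁.source := e₁.map_target h1
  have hFe : e₂ (e₁.symm (F s)) = F s := by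
    rw [← h₂.2 _ h2, h₁.2 _ hsrc]
    exact e₁.right_inv h1
  refine ⟨⟨h1, ?_⟩, ?_⟩
  · rw [← hFe]; exact e₂.map_source h2
  · have h3 := e₂.left_inv h2
    rw [hFe] at h3
    exact h3.symm

theorem monodromy {p : Polynomial ℂ} {U' : Set ℂ} (hsheets : HasSheets p U')
    {G : ℝ → ℝ → ℂ} (hG : Continuous fun q : ℝ × ℝ => G q.1 q.2)
    (hG1 : ∀ s, G s 1 = G 0 1)
    {z₀ : ℂ} {Λ : ℝ → ℝ → ℂ}
    (hΛ : ∀ s, IsLift p U' (G s) (Λ s) (Icc 0 1) ∧ Λ s 0 = z₀) :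
    ∀ s, Λ s 1 = Λ 0 1 := by
  classical
  have hGs : ∀ s : ℝ, Continuous fun t => G s t := fun s =>
    hG.comp (continuous_const.prodMk continuous_id)
  have key : ∀ s₀ : ℝ, ∀ᶠ s in 𝓝 s₀, Λ s 1 = Λ s₀ 1 := by
    intro s₀
    set g : ℝ → ℂ := Λ s₀ with hgdef
    have hglift := (hΛ s₀).1
    have hsheets' : ∀ t : ℝ, ∃ e, t ∈ Icc (0:ℝ) 1 → g t ∈ e.source ∧ Sheet p U' e := by
      intro t
      by_cases ht : t ∈ Icc (0:ℝ) 1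
      · obtain ⟨e, he1, he2⟩ := hsheets _ (hglift.2 t ht).1
        exact ⟨e, fun _ => ⟨he1, he2⟩⟩
      · exact ⟨OpenPartialHomeomorph.refl ℂ, fun h => absurd h ht⟩
    choose E hE using hsheets'
    have hE1 : ∀ t ∈ Icc (0:ℝ) 1, g t ∈ (E t).source := fun t ht => (hE t ht).1
    have hE2 : ∀ t ∈ Icc (0:ℝ) 1, Sheet p U' (E t) := fun t ht => (hE t ht).2
    set T : Set ℝ :=
      {b | b ∈ Icc (0:ℝ) 1 ∧ ∀ᶠ s in 𝓝 s₀, Λ s b = (E b).symm (G s b)} with hTdef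
    have hGb : ∀ b : ℝ, ContinuousAt (fun s => G s b) s₀ := fun b =>
      (hG.comp (continuous_id.prodMk continuous_const)).continuousAt
    have hgval : ∀ b ∈ Icc (0:ℝ) 1, G s₀ b = E b (g b) := fun b hb => by
      rw [← (hglift.2 b hb).2, (hE2 b hb).2 _ (hE1 b hb)]
    have hGtar : ∀ b ∈ Icc (0:ℝ) 1, G s₀ b ∈ (E b).target := fun b hb => by
      rw [hgval b hb]; exact (E b).map_source (hE1 b hb)
    have hT0 : (0:ℝ) ∈ T := by
      have h0 : (0:ℝ) ∈ Icc (0:ℝ) 1 := ⟨le_refl _, zero_le_one⟩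
      refine ⟨h0, Eventually.of_forall fun s => ?_⟩
      have h1 : G s 0 = G s₀ 0 := by
        rw [← ((hΛ s).1.2 0 h0).2, ← (hglift.2 0 h0).2, (hΛ s).2]
        show eval z₀ p = eval (Λ s₀ 0) p
        rw [(hΛ s₀).2]
      rw [(hΛ s).2, h1, hgval 0 h0, (E 0).left_inv (hE1 0 h0)]
      exact ((hΛ s₀).2).symm
    have step : ∀ (e : OpenPartialHomeomorph ℂ ℂ), Sheet p U' e → ∀ b b', b ∈ T →
        b' ∈ Icc (0:ℝ) 1 → b ≤ b' → (∀ t ∈ Icc b b', g t ∈ e.source) → b' ∈ T := by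
      intro e he b b' hbT hb' hbb' hcov
      have hb : b ∈ Icc (0:ℝ) 1 := hbT.1
      have hIcc : Icc b b' ⊆ Icc (0:ℝ) 1 := Icc_subset_Icc hb.1 hb'.2
      have hswb : ∀ᶠ s in 𝓝 s₀, (G s b ∈ (E b).target ∧ G s b ∈ e.target) ∧
          (E b).symm (G s b) = e.symm (G s b) := by
        refine sheet_switch (hE2 b hb) he (hGb b) (hGtar b hb) ?_
        have h1 : (E b).symm (G s₀ b) = g b := by
          rw [hgval b hb, (E b).left_inv (hE1 b hb)]
        rw [h1]; exact hcov b ⟨le_refl b, hbb'⟩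
      have htube : ∀ᶠ s in 𝓝 s₀, ∀ t ∈ Icc b b', G s t ∈ e.target := by
        have hKc : IsCompact (({s₀} : Set ℝ) ×ˢ Icc b b') := isCompact_singleton.prod isCompact_Icc
        have hO : IsOpen ((fun q : ℝ × ℝ => G q.1 q.2) ⁻¹' e.target) := e.open_target.preimage hG
        have hsub : ({s₀} : Set ℝ) ×ˢ Icc b b' ⊆ (fun q : ℝ × ℝ => G q.1 q.2) ⁻¹' e.target := by
          intro q hq
          obtain ⟨hq1, hq2⟩ := hq
          have hq1' : q.1 = s₀ := hq1
          show G q.1 q.2 ∈ e.target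
          rw [hq1']
          have h1 : G s₀ q.2 = e (g q.2) := by
            rw [← (hglift.2 q.2 (hIcc hq2)).2, he.2 _ (hcov q.2 hq2)]
          rw [h1]; exact e.map_source (hcov q.2 hq2)
        obtain ⟨δ, hδ0, hδ⟩ := hKc.exists_thickening_subset_open hO hsub
        filter_upwards [Metric.ball_mem_nhds s₀ hδ0] with s hs t ht
        have hmem : (s, t) ∈ Metric.thickening δ (({s₀} : Set ℝ) ×ˢ Icc b b') := by
          rw [Metric.mem_thickening_iff]
          refine ⟨(s₀, t), ⟨rfl, ht⟩, ?_⟩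
          rw [Prod.dist_eq]
          simp only [dist_self]
          rw [max_eq_left dist_nonneg]
          exact mem_ball.mp hs
        exact hδ hmem
      have hswb' : ∀ᶠ s in 𝓝 s₀, (G s b' ∈ e.target ∧ G s b' ∈ (E b').target) ∧
          e.symm (G s b') = (E b').symm (G s b') := by
        have hcb' : g b' ∈ e.source := hcov b' ⟨hbb', le_refl _⟩
        have h1 : G s₀ b' = e (g b') := by
          rw [← (hglift.2 b' hb').2, he.2 _ hcb']
        refine sheet_switch he (hE2 b' hb') (hGb b') ?_ ?_
        · rw [h1]; exact e.map_source hcb'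
        · rw [h1, e.left_inv hcb']; exact hE1 b' hb'
      refine ⟨hb', ?_⟩
      filter_upwards [hbT.2, hswb, htube, hswb'] with s hs1 hs2 hs3 hs4
      have hlift2 : IsLift p U' (G s) (fun t => e.symm (G s t)) (Icc b b') := by
        refine ⟨e.continuousOn_symm.comp (hGs s).continuousOn fun t ht => hs3 t ht,
          fun t ht => ?_⟩
        have h1 : e.symm (G s t) ∈ e.source := e.map_target (hs3 t ht)
        exact ⟨he.1 h1, by rw [he.2 _ h1, e.right_inv (hs3 t ht)]⟩
      have hlift1 : IsLift p U' (G s) (Λ s) (Icc b b') := (hΛ s).1.mono hIcc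
      have hb0 : Λ s b = e.symm (G s b) := by rw [hs1, hs2.2]
      have huniq := lift_unique hsheets isPreconnected_Icc hlift1 hlift2 ⟨le_refl b, hbb'⟩ hb0
      have hend := huniq ⟨hbb', le_refl b'⟩
      rw [hend]
      exact hs4.2
    have hTbdd : BddAbove T := ⟨1, fun x hx => hx.1.2⟩
    have hTne : T.Nonempty := ⟨0, hT0⟩
    set bs : ℝ := sSup T with hbsdef
    have hbs0 : 0 ≤ bs := le_csSup hTbdd hT0
    have hbs1 : bs ≤ 1 := csSup_le hTne fun x hx => hx.1.2
    have hbsI : bs ∈ Icc (0:ℝ) 1 := ⟨hbs0, hbs1⟩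
    have hgc : ContinuousWithinAt g (Icc 0 1) bs := hglift.1 bs hbsI
    have hnb : g ⁻¹' (E bs).source ∈ 𝓝[Icc (0:ℝ) 1] bs :=
      hgc ((E bs).open_source.mem_nhds (hE1 bs hbsI))
    rw [mem_nhdsWithin] at hnb
    obtain ⟨O, hOopen, hObs, hOsub⟩ := hnb
    obtain ⟨η, hη0, hball⟩ := Metric.isOpen_iff.mp hOopen bs hObs
    have hcovgen : ∀ t ∈ Icc (0:ℝ) 1, |t - bs| < η → g t ∈ (E bs).source := by
      intro t ht h
      exact hOsub ⟨hball (by rwa [mem_ball, Real.dist_eq]), ht⟩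
    have hbsT : bs ∈ T := by
      by_cases h : bs ∈ T
      · exact h
      obtain ⟨b, hbT, hbgt⟩ := exists_lt_of_lt_csSup hTne (by linarith : bs - η < bs)
      refine step (E bs) (hE2 bs hbsI) b bs hbT hbsI (le_csSup hTbdd hbT) ?_
      intro t ht
      refine hcovgen t ⟨le_trans hbT.1.1 ht.1, le_trans ht.2 hbs1⟩ ?_
      rw [abs_of_nonpos (by linarith [ht.2])]
      linarith [ht.1]
    have hbseq : bs = 1 := by
      by_contra hne
      have hlt : bs < 1 := lt_of_le_of_ne hbs1 hne
      set c := min 1 (bs + η / 2) with hcdef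
      have hbsc : bs < c := lt_min hlt (by linarith)
      have hcI : c ∈ Icc (0:ℝ) 1 := ⟨le_trans hbs0 hbsc.le, min_le_left _ _⟩
      have hcT : c ∈ T := by
        refine step (E bs) (hE2 bs hbsI) bs c hbsT hcI hbsc.le ?_
        intro t ht
        refine hcovgen t ⟨le_trans hbs0 ht.1, le_trans ht.2 hcI.2⟩ ?_
        rw [abs_of_nonneg (by linarith [ht.1])]
        have : t ≤ bs + η / 2 := le_trans ht.2 (min_le_right _ _)
        linarith
      exact absurd (le_csSup hTbdd hcT) (not_le.mpr hbsc)
    rw [hbseq] at hbsT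
    have h1I : (1:ℝ) ∈ Icc (0:ℝ) 1 := ⟨zero_le_one, le_refl _⟩
    filter_upwards [hbsT.2] with s hs
    rw [hs, hG1 s, ← hG1 s₀, hgval 1 h1I, (E 1).left_inv (hE1 1 h1I)]
  intro s
  have hA : IsClopen {s : ℝ | Λ s 1 = Λ 0 1} := by
    constructor
    · rw [← isOpen_compl_iff]
      rw [isOpen_iff_mem_nhds]
      intro s₀ hs₀
      filter_upwards [key s₀] with s' hs'
      simp only [mem_compl_iff, mem_setOf_eq] at hs₀ ⊢
      exact fun hc => hs₀ (hs'.symm.trans hc)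
    · rw [isOpen_iff_mem_nhds]
      intro s₀ hs₀
      filter_upwards [key s₀] with s' hs'
      show Λ s' 1 = Λ 0 1
      rw [hs']; exact hs₀
  have huniv := (isClopen_iff.mp hA).resolve_left (Nonempty.ne_empty ⟨0, rfl⟩)
  have hs : s ∈ {s : ℝ | Λ s 1 = Λ 0 1} := huniv.symm ▸ mem_univ s
  exact hs


/-- Simple connectivity transfers along homeomorphisms. -/
theorem simply_of_homeomorph {X Y : Type} [TopologicalSpace X] [TopologicalSpace Y]
    (h : X ≃ₜ Y) [SimplyConnectedSpace X] : SimplyConnectedSpace Y where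
  equiv_unit := by
    obtain ⟨e⟩ := SimplyConnectedSpace.equiv_unit (X := X)
    have H : ContinuousMap.HomotopyEquiv (TopCat.of X) (TopCat.of Y) := h.toHomotopyEquiv
    exact ⟨(FundamentalGroupoidFunctor.equivOfHomotopyEquiv H).symm.trans e⟩


end FatouAux

open FatouAux

/-- Lemma 2 (Monodromy lemma): if `p` is a nonconstant polynomial, `U` is a simply
connected open set, `U'` a connected component of `p⁻¹(U)`, and `p` has no critical
point in `U'`, then `p` is injective on `U'` and `U'` is simply connected. -/
theorem fatou_john_stmt3 (p : Polynomial ℂ) (hp : 0 < p.natDegree)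
    (U : Set ℂ) (hUo : IsOpen U) (hUsc : SimplyConnectedSpace U)
    (U' : Set ℂ)
    (hU' : ∃ x ∈ (fun z => p.eval z) ⁻¹' U,
      U' = connectedComponentIn ((fun z => p.eval z) ⁻¹' U) x)
    (hcrit : ∀ z ∈ U', p.derivative.eval z ≠ 0) :
    InjOn (fun z => p.eval z) U' ∧ SimplyConnectedSpace U' := by
  classical
  haveI := hUsc
  obtain ⟨x₀, hx₀T, hU'def⟩ := hU'
  set f : ℂ → ℂ := fun z => p.eval z with hfdef
  have hfc : Continuous f := p.continuous
  set T : Set ℂ := f ⁻¹' U with hTdef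
  have hTopen : IsOpen T := hUo.preimage hfc
  have hU'open : IsOpen U' := by rw [hU'def]; exact hTopen.connectedComponentIn
  have hx₀U' : x₀ ∈ U' := by rw [hU'def]; exact mem_connectedComponentIn hx₀T
  have hU'T : U' ⊆ T := by rw [hU'def]; exact connectedComponentIn_subset _ _
  have hU'conn : IsPreconnected U' := by rw [hU'def]; exact isPreconnected_connectedComponentIn
  -- U' absorbs limits that stay over U
  have hclosed : ∀ z ∈ closure U', p.eval z ∈ U → z ∈ U' := by
    intro z hz hfz
    have hzT : z ∈ T := hfz
    have hN : IsOpen (connectedComponentIn T z) := hTopen.connectedComponentIn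
    have hzN : z ∈ connectedComponentIn T z := mem_connectedComponentIn hzT
    obtain ⟨y, hyN, hyU'⟩ := mem_closure_iff.mp hz _ hN hzN
    have hunion : IsPreconnected (U' ∪ connectedComponentIn T z) :=
      IsPreconnected.union y hyU' hyN hU'conn isPreconnected_connectedComponentIn
    have hsub : U' ∪ connectedComponentIn T z ⊆ T :=
      union_subset hU'T (connectedComponentIn_subset _ _)
    have hcc := hunion.subset_connectedComponentIn (mem_union_left _ hx₀U') hsub
    rw [hU'def]
    exact hcc (mem_union_right _ hzN)
  -- properness
  have hprop : ∀ K : Set ℂ, IsCompact K → IsCompact (f ⁻¹' K) := by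
    intro K hK
    have hdeg : 0 < p.degree := natDegree_pos_iff_degree_pos.mp hp
    have htends : Tendsto (fun z : ℂ => ‖f z‖) (cocompact ℂ) atTop :=
      p.tendsto_norm_atTop hdeg tendsto_norm_cocompact_atTop
    obtain ⟨R, hR⟩ : ∃ R, ∀ y ∈ K, ‖y‖ ≤ R := hK.isBounded.exists_norm_le
    have hev : {z : ℂ | R < ‖f z‖} ∈ cocompact ℂ := htends.eventually (eventually_gt_atTop R)
    rw [mem_cocompact] at hev
    obtain ⟨C, hC, hCsub⟩ := hev
    refine IsCompact.of_isClosed_subset hC (hK.isClosed.preimage hfc) ?_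
    intro z hz
    by_contra hzC
    exact absurd (hR _ hz) (not_le.mpr (hCsub hzC))
  -- sheets
  have hsheets : HasSheets p U' := by
    intro z hz
    have hd := (p.hasStrictDerivAt z).hasStrictFDerivAt_equiv (hcrit z hz)
    have hz0 : z ∈ (hd.toOpenPartialHomeomorph f).source := hd.mem_toOpenPartialHomeomorph_source
    set e0 : OpenPartialHomeomorph ℂ ℂ := hd.toOpenPartialHomeomorph f with he0
    obtain ⟨r, hr0, hball⟩ :=
      Metric.isOpen_iff.mp (e0.open_source.inter hTopen) z ⟨hz0, hU'T hz⟩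
    have hballU' : ball z r ⊆ U' := by
      have h1 : IsPreconnected (ball z r) := (convex_ball z r).isPreconnected
      have h2 := h1.subset_connectedComponentIn (mem_ball_self hr0) fun w hw => (hball hw).2
      have h3 : connectedComponentIn T z = U' := by
        rw [hU'def]
        refine (connectedComponentIn_eq ?_).symm
        rw [← hU'def]; exact hz
      rwa [h3] at h2
    refine ⟨e0.restr (ball z r), ?_, ?_, ?_⟩
    · rw [e0.restr_source' _ isOpen_ball]
      exact ⟨hz0, mem_ball_self hr0⟩
    · rw [e0.restr_source' _ isOpen_ball]
      exact fun w hw => hballU' hw.2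
    · intro x hx
      rw [e0.restr_source' _ isOpen_ball] at hx
      show p.eval x = e0 x
      have : ⇑e0 = f := hd.toOpenPartialHomeomorph_coe
      rw [this]
  -- open images
  have himg : ∀ V : Set ℂ, V ⊆ U' → IsOpen V → IsOpen (f '' V) := by
    intro V hVU' hVopen
    rw [isOpen_iff_forall_mem_open]
    rintro w ⟨z, hzV, rfl⟩
    obtain ⟨e, hze, heU', hep⟩ := hsheets z (hVU' hzV)
    refine ⟨(e.restr V).target, ?_, (e.restr V).open_target, ?_⟩
    · intro y hy
      rw [← (e.restr V).image_source_eq_target] at hy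
      obtain ⟨x, hx, rfl⟩ := hy
      rw [e.restr_source' _ hVopen] at hx
      exact ⟨x, hx.2, hep x hx.1⟩
    · rw [← (e.restr V).image_source_eq_target]
      refine ⟨z, ?_, (hep z hze).symm⟩
      rw [e.restr_source' _ hVopen]
      exact ⟨hze, hzV⟩
  -- injectivity
  have hinj : InjOn f U' := by
    intro z₁ hz₁ z₂ hz₂ heq
    have hpc : IsPathConnected U' :=
      hU'open.isConnected_iff_isPathConnected.mp ⟨⟨x₀, hx₀U'⟩, hU'conn⟩
    obtain ⟨δ, hδmem⟩ := hpc.joinedIn z₁ hz₁ z₂ hz₂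
    have hw : f z₁ ∈ U := hU'T hz₁
    have hΓmem : ∀ t : unitInterval, f (δ t) ∈ U := fun t => hU'T (hδmem t)
    set Γ : Path (⟨f z₁, hw⟩ : U) (⟨f z₁, hw⟩ : U) :=
      { toFun := fun t => ⟨f (δ t), hΓmem t⟩
        continuous_toFun := ((hfc.comp δ.continuous).subtype_mk _)
        source' := Subtype.ext (by simp)
        target' := Subtype.ext (by simpa using heq.symm) } with hΓdef
    obtain ⟨H⟩ : Path.Homotopic Γ (Path.refl _) :=
      SimplyConnectedSpace.paths_homotopic Γ (Path.refl _)
    set G : ℝ → ℝ → ℂ := fun s t =>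
      (H (projIcc 0 1 zero_le_one s, projIcc 0 1 zero_le_one t) : ℂ) with hGdef
    have hGcont : Continuous fun q : ℝ × ℝ => G q.1 q.2 :=
      continuous_subtype_val.comp (H.continuous.comp
        ((continuous_projIcc.comp continuous_fst).prodMk
          (continuous_projIcc.comp continuous_snd)))
    have hGU : ∀ s t, G s t ∈ U := fun s t => (H _).2
    have h0mem : (0 : unitInterval) ∈ ({0, 1} : Set unitInterval) := by left; rfl
    have h1mem : (1 : unitInterval) ∈ ({0, 1} : Set unitInterval) := by right; rfl
    have hproj0 : projIcc (0:ℝ) 1 zero_le_one 0 = (0 : unitInterval) := by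
      rw [projIcc_left]; rfl
    have hproj1 : projIcc (0:ℝ) 1 zero_le_one 1 = (1 : unitInterval) := by
      rw [projIcc_right]; rfl
    have hΓcoe : ∀ x : unitInterval, (Γ x : ℂ) = f (δ x) := fun x => rfl
    have hG0 : ∀ s, G s 0 = f z₁ := by
      intro s
      show (H (projIcc 0 1 zero_le_one s, projIcc 0 1 zero_le_one 0) : ℂ) = f z₁
      rw [hproj0, H.eq_fst (projIcc 0 1 zero_le_one s) h0mem]
      show (Γ 0 : ℂ) = f z₁
      rw [hΓcoe, δ.source]
    have hG1 : ∀ s, G s 1 = G 0 1 := by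
      intro s
      show (H (projIcc 0 1 zero_le_one s, projIcc 0 1 zero_le_one 1) : ℂ)
        = (H (projIcc 0 1 zero_le_one 0, projIcc 0 1 zero_le_one 1) : ℂ)
      rw [hproj1, H.eq_fst (projIcc 0 1 zero_le_one s) h1mem,
        H.eq_fst (projIcc 0 1 zero_le_one 0) h1mem]
    have hlifts : ∀ s : ℝ, ∃ g, IsLift p U' (G s) g (Icc 0 1) ∧ g 0 = z₁ := by
      intro s
      have hGscont : Continuous fun t => G s t :=
        hGcont.comp (continuous_const.prodMk continuous_id)
      refine lift_exists hsheets hprop hclosed hGscont (fun t _ => hGU s t) hz₁ ?_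
      show p.eval z₁ = G s 0
      rw [hG0 s]
    choose Λ hΛ using hlifts
    have hmono := monodromy hsheets hGcont hG1 hΛ
    -- identify the lift at s = 0 with δ.extend
    have hδlift : IsLift p U' (G 0) δ.extend (Icc 0 1) := by
      refine ⟨δ.continuous_extend.continuousOn, fun t ht => ?_⟩
      have h1 : δ.extend t = δ (projIcc 0 1 zero_le_one t) := rfl
      constructor
      · rw [h1]; exact hδmem _
      · rw [h1]
        show p.eval (δ (projIcc 0 1 zero_le_one t))
          = (H (projIcc 0 1 zero_le_one 0, projIcc 0 1 zero_le_one t) : ℂ)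
        rw [hproj0]
        have h2 : H ((0 : unitInterval), projIcc 0 1 zero_le_one t)
            = Γ (projIcc 0 1 zero_le_one t) := H.apply_zero _
        rw [h2, hΓcoe]
    have hconst : IsLift p U' (G 1) (fun _ => z₁) (Icc 0 1) := by
      refine ⟨continuousOn_const, fun t ht => ⟨hz₁, ?_⟩⟩
      show p.eval z₁ = (H (projIcc 0 1 zero_le_one 1, projIcc 0 1 zero_le_one t) : ℂ)
      rw [hproj1]
      have h2 : H ((1 : unitInterval), projIcc 0 1 zero_le_one t)
          = Path.refl (⟨f z₁, hw⟩ : U) (projIcc 0 1 zero_le_one t) := H.apply_one _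
      rw [h2]
      rfl
    have h01 : (0:ℝ) ∈ Icc (0:ℝ) 1 := ⟨le_refl _, zero_le_one⟩
    have h11 : (1:ℝ) ∈ Icc (0:ℝ) 1 := ⟨zero_le_one, le_refl _⟩
    have hΛ0 : Λ 0 1 = z₂ := by
      have := lift_unique hsheets isPreconnected_Icc (hΛ 0).1 hδlift h01
        (by rw [(hΛ 0).2, Path.extend_zero])
      have h2 := this h11
      rw [h2, Path.extend_one]
    have hΛ1 : Λ 1 1 = z₁ := by
      have := lift_unique hsheets isPreconnected_Icc (hΛ 1).1 hconst h01 (by rw [(hΛ 1).2])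
      exact this h11
    have := hmono 1
    rw [hΛ1, hΛ0] at this
    exact this
  -- surjectivity onto U
  have hUconn : IsPreconnected U := by
    have h1 : PreconnectedSpace U := inferInstance
    exact isPreconnected_iff_preconnectedSpace.mpr h1
  have himgU : f '' U' = U := by
    apply Subset.antisymm
    · rintro _ ⟨z, hz, rfl⟩; exact hU'T hz
    intro w hwU
    have hopen : IsOpen (f '' U') := himg U' Subset.rfl hU'open
    have hclosure : ∀ w' ∈ U, w' ∈ closure (f '' U') → w' ∈ f '' U' := by
      intro w' hw'U hw'c
      obtain ⟨v, hv, hvlim⟩ := mem_closure_iff_seq_limit.mp hw'c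
      choose zf hzf hfzf using hv
      obtain ⟨N, hN⟩ := (hvlim.eventually (closedBall_mem_nhds w' one_pos)).exists_forall_of_atTop
      have hseq : ∀ n : ℕ, zf (n + N) ∈ f ⁻¹' closedBall w' 1 := by
        intro n
        have := hN (n + N) (Nat.le_add_left N n)
        rw [mem_preimage, hfzf]
        exact this
      obtain ⟨z', hz'K, φ, hφ, hφlim⟩ :=
        (hprop _ (isCompact_closedBall w' 1)).tendsto_subseq hseq
      have hfz' : f z' = w' := by
        have h1 : Tendsto (fun n => f (zf (φ n + N))) atTop (𝓝 (f z')) :=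
          (hfc.continuousAt.tendsto).comp hφlim
        have h2 : Tendsto (fun n => v (φ n + N)) atTop (𝓝 w') :=
          hvlim.comp (tendsto_atTop_mono (fun n => Nat.le_add_right (φ n) N) hφ.tendsto_atTop)
        have h3 : (fun n => f (zf (φ n + N))) = fun n => v (φ n + N) := by
          funext n; exact hfzf _
        rw [h3] at h1
        exact tendsto_nhds_unique h1 h2
      have hz'U' : z' ∈ U' := by
        refine hclosed z' ?_ (by show f z' ∈ U; rw [hfz']; exact hw'U)
        exact mem_closure_of_tendsto hφlim (Eventually.of_forall fun n => hzf _)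
      exact ⟨z', hz'U', hfz'⟩
    -- clopen argument in the subtype of U
    haveI : PreconnectedSpace U := isPreconnected_iff_preconnectedSpace.mp hUconn
    have hA : IsClopen (Subtype.val ⁻¹' (f '' U') : Set U) := by
      constructor
      · have hAeq : (Subtype.val ⁻¹' (f '' U') : Set U)
            = Subtype.val ⁻¹' (closure (f '' U')) := by
          apply Subset.antisymm
          · exact fun u hu => subset_closure hu
          · exact fun u hu => hclosure _ u.2 hu
        rw [hAeq]
        exact (isClosed_closure).preimage continuous_subtype_val
      · exact hopen.preimage continuous_subtype_val
    have huniv := (isClopen_iff.mp hA).resolve_left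
      (Nonempty.ne_empty ⟨⟨f x₀, hU'T hx₀U'⟩, ⟨x₀, hx₀U', rfl⟩⟩)
    have : (⟨w, hwU⟩ : U) ∈ (Subtype.val ⁻¹' (f '' U') : Set U) := huniv.symm ▸ mem_univ _
    exact this
  -- homeomorphism
  set F : U' → U := fun z => ⟨f z, hU'T z.2⟩ with hFdef
  have hFcont : Continuous F := (hfc.comp continuous_subtype_val).subtype_mk _
  have hFbij : Function.Bijective F := by
    constructor
    · intro a b hab
      exact Subtype.ext (hinj a.2 b.2 (congrArg Subtype.val hab))
    · intro u
      have hmem : (u : ℂ) ∈ f '' U' := himgU.symm ▸ u.2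
      obtain ⟨z, hz, hfz⟩ := hmem
      exact ⟨⟨z, hz⟩, Subtype.ext hfz⟩
  have hFopen : IsOpenMap F := by
    intro s hs
    have h1 : IsOpen (Subtype.val '' s) := hU'open.isOpenEmbedding_subtypeVal.isOpenMap _ hs
    have hsub : Subtype.val '' s ⊆ U' := by
      rintro x ⟨y, _, rfl⟩; exact y.2
    have h2 : IsOpen (f '' (Subtype.val '' s)) := himg _ hsub h1
    have h3 : F '' s = Subtype.val ⁻¹' (f '' (Subtype.val '' s)) := by
      ext u
      constructor
      · rintro ⟨y, hy, rfl⟩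
        exact ⟨y, ⟨y, hy, rfl⟩, rfl⟩
      · rintro ⟨x, ⟨y, hy, rfl⟩, hxy⟩
        refine ⟨y, hy, Subtype.ext hxy⟩
    rw [h3]
    exact h2.preimage continuous_subtype_val
  have homeo : ↥U' ≃ₜ ↥U :=
    Equiv.toHomeomorphOfContinuousOpen (Equiv.ofBijective F hFbij) hFcont hFopen
  exact ⟨hinj, simply_of_homeomorph homeo.symm⟩
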